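/- arXiv:2206.07760 — 2 statements merged into one kernel-verified Lean document; each statement's English description precedes it below -/
import Mathlib

section
/- The continuous Markov stability of any partition at any time t ≥ 0 satisfies -1/2 < r_cont({C_i}, t) ≤ 1, where r_cont({C_i}, t) = Σ_{u,v} π_u (P(t)_{uv} - π_v) δ(c_u, c_v). -/
open Matrix BigOperators

namespace Stmt14Aux
variable {n : ℕ}
open NormedSpace

theorem exp_mulVec_fixed (M : Matrix (Fin n) (Fin n) ℝ) (v : Fin n → ℝ)
    (h : M.mulVec v = 0) : (exp M).mulVec v = v := by
  letI : SeminormedRing (Matrix (Fin n) (Fin n) ℝ) := Matrix.linftyOpSemiNormedRing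
  letI : NormedRing (Matrix (Fin n) (Fin n) ℝ) := Matrix.linftyOpNormedRing
  letI : NormedAlgebra ℝ (Matrix (Fin n) (Fin n) ℝ) := Matrix.linftyOpNormedAlgebra
  have hsum : Summable (fun k : ℕ => ((k.factorial : ℝ))⁻¹ • M ^ k) :=
    expSeries_summable' (𝕂 := ℝ) M
  let f : Matrix (Fin n) (Fin n) ℝ →ₗ[ℝ] (Fin n → ℝ) :=
    { toFun := fun B => B.mulVec v
      map_add' := fun B C => Matrix.add_mulVec B C v
      map_smul' := fun r B => Matrix.smul_mulVec r B v }
  let F : Matrix (Fin n) (Fin n) ℝ →L[ℝ] (Fin n → ℝ) :=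
    ⟨f, f.continuous_of_finiteDimensional⟩
  have key : (exp M).mulVec v = ∑' k : ℕ, ((k.factorial : ℝ))⁻¹ • (M ^ k).mulVec v := by
    rw [exp_eq_tsum ℝ]
    refine (F.map_tsum hsum).trans ?_
    exact tsum_congr fun k => by simp [F, f, Matrix.smul_mulVec]
  rw [key]
  rw [tsum_eq_single 0]
  · simp
  · intro k hk
    obtain ⟨m, rfl⟩ := Nat.exists_eq_succ_of_ne_zero hk
    rw [pow_succ, ← Matrix.mulVec_mulVec, h, Matrix.mulVec_zero, smul_zero]

theorem pow_entry_nonneg (M : Matrix (Fin n) (Fin n) ℝ) (h : ∀ i j, 0 ≤ M i j) :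
    ∀ (k : ℕ) (i j), 0 ≤ (M ^ k) i j := by
  intro k
  induction k with
  | zero => intro i j; simp [Matrix.one_apply]; positivity
  | succ m ih =>
    intro i j
    rw [pow_succ, Matrix.mul_apply]
    exact Finset.sum_nonneg fun l _ => mul_nonneg (ih i l) (h l j)

theorem exp_entry_nonneg (M : Matrix (Fin n) (Fin n) ℝ) (h : ∀ i j, 0 ≤ M i j)
    (i j : Fin n) : 0 ≤ (exp M) i j := by
  letI : SeminormedRing (Matrix (Fin n) (Fin n) ℝ) := Matrix.linftyOpSemiNormedRing
  letI : NormedRing (Matrix (Fin n) (Fin n) ℝ) := Matrix.linftyOpNormedRing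
  letI : NormedAlgebra ℝ (Matrix (Fin n) (Fin n) ℝ) := Matrix.linftyOpNormedAlgebra
  have hsum : Summable (fun k : ℕ => ((k.factorial : ℝ))⁻¹ • M ^ k) :=
    expSeries_summable' (𝕂 := ℝ) M
  let f : Matrix (Fin n) (Fin n) ℝ →ₗ[ℝ] ℝ :=
    { toFun := fun B => B i j
      map_add' := fun B C => rfl
      map_smul' := fun r B => rfl }
  let F : Matrix (Fin n) (Fin n) ℝ →L[ℝ] ℝ := ⟨f, f.continuous_of_finiteDimensional⟩
  have key : (exp M) i j = ∑' k : ℕ, ((k.factorial : ℝ))⁻¹ • (M ^ k) i j := by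
    rw [exp_eq_tsum ℝ]
    refine (F.map_tsum hsum).trans ?_
    exact tsum_congr fun k => by simp [F, f]; exact Or.inl rfl
  rw [key]
  refine tsum_nonneg fun k => ?_
  have := pow_entry_nonneg M h k i j
  positivity

theorem exp_smul_one (r : ℝ) :
    exp (r • (1 : Matrix (Fin n) (Fin n) ℝ)) = Real.exp r • 1 := by
  letI : SeminormedRing (Matrix (Fin n) (Fin n) ℝ) := Matrix.linftyOpSemiNormedRing
  letI : NormedRing (Matrix (Fin n) (Fin n) ℝ) := Matrix.linftyOpNormedRing
  letI : NormedAlgebra ℝ (Matrix (Fin n) (Fin n) ℝ) := Matrix.linftyOpNormedAlgebra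
  have h1 : r • (1 : Matrix (Fin n) (Fin n) ℝ) = algebraMap ℝ _ r :=
    (Algebra.algebraMap_eq_smul_one r).symm
  rw [h1]
  refine (algebraMap_exp_comm r).symm.trans ?_
  rw [← Real.exp_eq_exp_ℝ, Algebra.algebraMap_eq_smul_one]

end Stmt14Aux

/-- The continuous Markov stability of any partition `{C_i}` (encoded by a surjective
community assignment `c : V → Fin k`) of a connected weighted graph at any time `t ≥ 0`
satisfies `-1/2 < r_cont({C_i}, t) ≤ 1`, where
`r_cont = Σ_{u,v} π_u (P(t)_{uv} - π_v) δ(c_u, c_v)`. -/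
theorem stmt14 {n k : ℕ} (A : Matrix (Fin n) (Fin n) ℝ)
    (hsym : A.IsSymm) (hnonneg : ∀ u v, 0 ≤ A u v)
    (hdeg : ∀ v, 0 < ∑ u, A v u)
    (hconn : ∀ u v : Fin n, Relation.ReflTransGen (fun x y => A x y ≠ 0) u v)
    (c : Fin n → Fin k) (hc : Function.Surjective c)
    (t : ℝ) (ht : 0 ≤ t) :
    -(1 / 2) <
      (∑ u, ∑ v, ((∑ w, A u w) / (∑ x, ∑ w, A x w)) *
        ((NormedSpace.exp
            (-(t • (Matrix.diagonal (fun x => (∑ w, A x w)⁻¹) *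
              (Matrix.diagonal (fun x => ∑ w, A x w) - A))))) u v -
          (∑ w, A v w) / (∑ x, ∑ w, A x w)) *
        (if c u = c v then 1 else 0)) ∧
    (∑ u, ∑ v, ((∑ w, A u w) / (∑ x, ∑ w, A x w)) *
        ((NormedSpace.exp
            (-(t • (Matrix.diagonal (fun x => (∑ w, A x w)⁻¹) *
              (Matrix.diagonal (fun x => ∑ w, A x w) - A))))) u v -
          (∑ w, A v w) / (∑ x, ∑ w, A x w)) *
        (if c u = c v then 1 else 0)) ≤ 1 := by
  classical
  rcases Nat.eq_zero_or_pos n with rfl | hn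
  · constructor <;> simp
  haveI : NeZero n := ⟨hn.ne'⟩
  obtain ⟨d, hd⟩ : ∃ d : Fin n → ℝ, ∀ v, (∑ w, A v w) = d v :=
    ⟨fun v => ∑ w, A v w, fun _ => rfl⟩
  simp only [hd]
  have hd0 : ∀ v, 0 < d v := fun v => (hd v) ▸ hdeg v
  set D : ℝ := ∑ x, d x with hD
  have hD0 : 0 < D := Finset.sum_pos (fun v _ => hd0 v) Finset.univ_nonempty
  set s : Fin n → ℝ := fun v => Real.sqrt (d v) with hs
  have hs0 : ∀ v, 0 < s v := fun v => Real.sqrt_pos.2 (hd0 v)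
  have hss : ∀ v, s v * s v = d v := fun v => Real.mul_self_sqrt (hd0 v).le
  set L0 : Matrix (Fin n) (Fin n) ℝ := Matrix.diagonal (fun x => d x) - A with hL0
  set Qi : Matrix (Fin n) (Fin n) ℝ := Matrix.diagonal (fun v => (s v)⁻¹) with hQi
  set Q : Matrix (Fin n) (Fin n) ℝ := Matrix.diagonal s with hQ
  set N : Matrix (Fin n) (Fin n) ℝ := Qi * L0 * Qi with hN
  set E : Matrix (Fin n) (Fin n) ℝ := NormedSpace.exp (-(t • N)) with hE
  set B : Matrix (Fin n) (Fin n) ℝ := NormedSpace.exp (-((t/2) • N)) with hB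
  have hQQi : Q * Qi = 1 := by
    rw [hQ, hQi, Matrix.diagonal_mul_diagonal,
      show (fun i => s i * (s i)⁻¹) = fun _ => (1:ℝ) from
        funext fun v => mul_inv_cancel₀ (hs0 v).ne', Matrix.diagonal_one]
  have hQiQ : Qi * Q = 1 := by
    rw [hQ, hQi, Matrix.diagonal_mul_diagonal,
      show (fun i => (s i)⁻¹ * s i) = fun _ => (1:ℝ) from
        funext fun v => inv_mul_cancel₀ (hs0 v).ne', Matrix.diagonal_one]
  have hQiQi : Qi * Qi = Matrix.diagonal (fun v => (d v)⁻¹) := by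
    rw [hQi, Matrix.diagonal_mul_diagonal]
    exact congrArg _ (funext fun v => by rw [← hss v, mul_inv])
  have hLrwN : Matrix.diagonal (fun x => (d x)⁻¹) * L0 = Qi * N * Q := by
    have h1 : Qi * N * Q = (Qi * Qi) * L0 * (Qi * Q) := by
      rw [hN]; noncomm_ring
    rw [h1, hQiQ, hQiQi, Matrix.mul_one]
  have hconj : -(t • (Matrix.diagonal (fun x => (d x)⁻¹) * L0)) = Qi * (-(t • N)) * Q := by
    rw [hLrwN]
    simp only [mul_neg, neg_mul, mul_smul_comm, smul_mul_assoc]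
  have hPexp : NormedSpace.exp (-(t • (Matrix.diagonal (fun x => (d x)⁻¹) * L0)))
      = Qi * E * Q := by
    rw [hconj]
    exact Matrix.exp_units_conj ⟨Qi, Q, hQiQ, hQQi⟩ (-(t • N))
  have hL0sym : L0ᵀ = L0 := by
    rw [hL0, Matrix.transpose_sub, Matrix.diagonal_transpose, hsym]
  have hNsym : Nᵀ = N := by
    rw [hN, Matrix.transpose_mul, Matrix.transpose_mul, hQi, Matrix.diagonal_transpose,
      hL0sym, Matrix.mul_assoc]
  have hEsym : Eᵀ = E := by
    rw [hE, ← Matrix.exp_transpose, Matrix.transpose_neg, Matrix.transpose_smul, hNsym]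
  have hBsym : Bᵀ = B := by
    rw [hB, ← Matrix.exp_transpose, Matrix.transpose_neg, Matrix.transpose_smul, hNsym]
  have hEB : E = B * B := by
    have h2 : -(t • N) = -((t/2) • N) + -((t/2) • N) := by
      rw [← neg_add, ← add_smul]; norm_num
    rw [hE, h2, Matrix.exp_add_of_commute _ _ (Commute.refl _), hB]
  have hQis : Qi.mulVec s = 1 := by
    funext v
    rw [hQi, Matrix.mulVec_diagonal, Pi.one_apply]
    exact inv_mul_cancel₀ (hs0 v).ne'
  have hNmul : N.mulVec s = 0 := by
    have h2 : L0.mulVec 1 = 0 := by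
      funext v
      rw [hL0, Matrix.sub_mulVec, Pi.sub_apply, Matrix.mulVec_diagonal, Pi.one_apply, mul_one,
        Pi.zero_apply, ← hd v]
      simp [Matrix.mulVec, dotProduct]
    rw [hN, ← Matrix.mulVec_mulVec, hQis, ← Matrix.mulVec_mulVec, h2, Matrix.mulVec_zero]
  have hEs : E.mulVec s = s := by
    rw [hE]
    refine Stmt14Aux.exp_mulVec_fixed _ _ ?_
    rw [Matrix.neg_mulVec, Matrix.smul_mulVec, hNmul, smul_zero, neg_zero]
  have hBs : B.mulVec s = s := by
    rw [hB]
    refine Stmt14Aux.exp_mulVec_fixed _ _ ?_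
    rw [Matrix.neg_mulVec, Matrix.smul_mulVec, hNmul, smul_zero, neg_zero]
  have hPentry : ∀ u v, (Qi * E * Q) u v = ((s u)⁻¹ * E u v) * s v := by
    intro u v
    rw [hQ, Matrix.mul_diagonal, hQi, Matrix.diagonal_mul]
  have hProw : ∀ u0, (∑ v, (Qi * E * Q) u0 v) = 1 := by
    have h3 : (Qi * E * Q).mulVec 1 = 1 := by
      have hQ1 : Q.mulVec 1 = s := by
        funext v; rw [hQ, Matrix.mulVec_diagonal, Pi.one_apply, mul_one]
      rw [← Matrix.mulVec_mulVec, hQ1, ← Matrix.mulVec_mulVec, hEs, hQis]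
    intro u0
    have h4 := congrFun h3 u0
    simpa [Matrix.mulVec, dotProduct] using h4
  have hPnn : ∀ u v, 0 ≤ (Qi * E * Q) u v := by
    set W : Matrix (Fin n) (Fin n) ℝ := Matrix.diagonal (fun x => (d x)⁻¹) * A with hW
    have hsplit : -(t • (Matrix.diagonal (fun x => (d x)⁻¹) * L0))
        = t • W + (-t) • (1 : Matrix (Fin n) (Fin n) ℝ) := by
      have h5 : Matrix.diagonal (fun x => (d x)⁻¹) * L0 = 1 - W := by
        rw [hL0, Matrix.mul_sub, Matrix.diagonal_mul_diagonal, hW,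
          show (fun i => (d i)⁻¹ * d i) = fun _ => (1:ℝ) from
            funext fun v => inv_mul_cancel₀ (hd0 v).ne', Matrix.diagonal_one]
      rw [h5, smul_sub]
      simp only [neg_smul]
      abel
    have hcomm : Commute (t • W) ((-t) • (1 : Matrix (Fin n) (Fin n) ℝ)) :=
      (Commute.one_right (t • W)).smul_right (-t)
    intro u v
    rw [← hPexp, hsplit, Matrix.exp_add_of_commute _ _ hcomm, Stmt14Aux.exp_smul_one]
    have hWnn : ∀ i j, 0 ≤ (t • W) i j := by
      intro i j
      rw [Matrix.smul_apply, hW, Matrix.diagonal_mul]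
      have := hnonneg i j
      have := (hd0 i).le
      positivity
    have h6 := Stmt14Aux.exp_entry_nonneg _ hWnn u v
    rw [mul_smul_comm, mul_one, Matrix.smul_apply]
    positivity
  rw [hPexp]
  -- community indicator vectors
  set x : Fin k → Fin n → ℝ := fun i u => if c u = i then s u else 0 with hx
  set m : Fin k → ℝ := fun i => (x i) ⬝ᵥ s with hm
  set q : Fin k → ℝ := fun i => (x i) ⬝ᵥ (E.mulVec (x i)) with hq
  have hvm : ∀ i, (x i) ᵥ* B = B.mulVec (x i) := by
    intro i
    conv_lhs => rw [← hBsym]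
    rw [Matrix.vecMul_transpose]
  have hqz : ∀ i, q i = (B.mulVec (x i)) ⬝ᵥ (B.mulVec (x i)) := by
    intro i
    show x i ⬝ᵥ (E.mulVec (x i)) = _
    rw [hEB, ← Matrix.mulVec_mulVec, Matrix.dotProduct_mulVec, hvm i]
  have hmz : ∀ i, m i = (B.mulVec (x i)) ⬝ᵥ s := by
    intro i
    show x i ⬝ᵥ s = _
    conv_lhs => rw [← hBs]
    rw [Matrix.dotProduct_mulVec, hvm i]
  have hqm : ∀ i, (m i)^2 ≤ q i * D := by
    intro i
    have hcs := Finset.sum_mul_sq_le_sq_mul_sq Finset.univ (B.mulVec (x i)) s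
    have hzz : (B.mulVec (x i)) ⬝ᵥ (B.mulVec (x i)) = ∑ u, (B.mulVec (x i)) u ^ 2 :=
      Finset.sum_congr rfl fun u _ => (sq _).symm
    have hsD : (∑ u, s u ^ 2) = D := by
      rw [hD]; exact Finset.sum_congr rfl fun u _ => by rw [sq, hss]
    have hds : (B.mulVec (x i)) ⬝ᵥ s = ∑ u, (B.mulVec (x i)) u * s u := rfl
    rw [hmz i, hqz i, hds, hzz]
    calc (∑ u, (B.mulVec (x i)) u * s u)^2
        ≤ (∑ u, (B.mulVec (x i)) u ^ 2) * ∑ u, s u ^ 2 := hcs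
      _ = (∑ u, (B.mulVec (x i)) u ^ 2) * D := by rw [hsD]
  have hdelta : ∀ u v, (if c u = c v then (1:ℝ) else 0)
      = ∑ i, (if c u = i then (1:ℝ) else 0) * (if c v = i then 1 else 0) := by
    intro u v
    simp only [ite_mul, one_mul, zero_mul]
    rw [Finset.sum_ite_eq Finset.univ (c u) (fun i => if c v = i then (1:ℝ) else 0)]
    simp only [Finset.mem_univ, if_true]
    by_cases h : c u = c v
    · rw [if_pos h, if_pos h.symm]
    · rw [if_neg h, if_neg fun hh => h hh.symm]
  -- pointwise identities
  have hpt1 : ∀ u v, (d u / D) * ((Qi * E * Q) u v) * (if c u = c v then 1 else 0)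
      = ∑ i, (1/D) * (x i u * (E u v * x i v)) := by
    intro u v
    rw [hPentry u v, hdelta u v, Finset.mul_sum]
    refine Finset.sum_congr rfl fun i _ => ?_
    by_cases h1 : c u = i <;> by_cases h2 : c v = i <;>
      simp only [hx, h1, h2, if_pos, if_neg, if_true, if_false, mul_zero, zero_mul,
        mul_one, one_mul] <;> try ring
    rw [← hss u]
    field_simp [(hs0 u).ne', hD0.ne']
    try ring
  have hpt2 : ∀ u v, (d u / D) * (d v / D) * (if c u = c v then 1 else 0)
      = ∑ i, ((1/D) * (x i u * s u)) * ((1/D) * (x i v * s v)) := by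
    intro u v
    rw [hdelta u v, Finset.mul_sum]
    refine Finset.sum_congr rfl fun i _ => ?_
    by_cases h1 : c u = i <;> by_cases h2 : c v = i <;>
      simp only [hx, h1, h2, if_pos, if_neg, if_true, if_false, mul_zero, zero_mul,
        mul_one, one_mul] <;> try ring
    rw [← hss u, ← hss v]
    ring
  -- split the target sum
  have hsplitS : ∀ P' : Matrix (Fin n) (Fin n) ℝ,
      (∑ u, ∑ v, (d u / D) * (P' u v - d v / D) * (if c u = c v then 1 else 0))
      = (∑ u, ∑ v, (d u / D) * (P' u v) * (if c u = c v then 1 else 0))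
        - (∑ u, ∑ v, (d u / D) * (d v / D) * (if c u = c v then 1 else 0)) := by
    intro P'
    rw [← Finset.sum_sub_distrib]
    refine Finset.sum_congr rfl fun u _ => ?_
    rw [← Finset.sum_sub_distrib]
    refine Finset.sum_congr rfl fun v _ => ?_
    ring
  have hA1 : (∑ u, ∑ v, (d u / D) * ((Qi * E * Q) u v) * (if c u = c v then 1 else 0))
      = ∑ i, (1/D) * q i := by
    calc (∑ u, ∑ v, (d u / D) * ((Qi * E * Q) u v) * (if c u = c v then 1 else 0))
        = ∑ u, ∑ v, ∑ i, (1/D) * (x i u * (E u v * x i v)) := by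
          exact Finset.sum_congr rfl fun u _ => Finset.sum_congr rfl fun v _ => hpt1 u v
      _ = ∑ u, ∑ i, ∑ v, (1/D) * (x i u * (E u v * x i v)) :=
          Finset.sum_congr rfl fun u _ => Finset.sum_comm
      _ = ∑ i, ∑ u, ∑ v, (1/D) * (x i u * (E u v * x i v)) := Finset.sum_comm
      _ = ∑ i, (1/D) * q i := by
          refine Finset.sum_congr rfl fun i _ => ?_
          show _ = (1/D) * ∑ u, x i u * ∑ v, E u v * x i v
          rw [Finset.mul_sum]
          refine Finset.sum_congr rfl fun u _ => ?_
          rw [Finset.mul_sum, Finset.mul_sum]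
  have hA2 : (∑ u, ∑ v, (d u / D) * (d v / D) * (if c u = c v then 1 else 0))
      = ∑ i, ((1/D) * m i) * ((1/D) * m i) := by
    calc (∑ u, ∑ v, (d u / D) * (d v / D) * (if c u = c v then 1 else 0))
        = ∑ u, ∑ v, ∑ i, ((1/D) * (x i u * s u)) * ((1/D) * (x i v * s v)) := by
          exact Finset.sum_congr rfl fun u _ => Finset.sum_congr rfl fun v _ => hpt2 u v
      _ = ∑ u, ∑ i, ∑ v, ((1/D) * (x i u * s u)) * ((1/D) * (x i v * s v)) :=
          Finset.sum_congr rfl fun u _ => Finset.sum_comm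
      _ = ∑ i, ∑ u, ∑ v, ((1/D) * (x i u * s u)) * ((1/D) * (x i v * s v)) := Finset.sum_comm
      _ = ∑ i, ((1/D) * m i) * ((1/D) * m i) := by
          refine Finset.sum_congr rfl fun i _ => ?_
          have e1 : ((1/D) * m i) = ∑ u, (1/D) * (x i u * s u) := by
            show (1/D) * (∑ u, x i u * s u) = _
            rw [Finset.mul_sum]
          rw [e1, Finset.sum_mul_sum]
  rw [hsplitS, hA1, hA2]
  have hterm : ∀ i : Fin k, 0 ≤ (1/D) * q i - ((1/D) * m i) * ((1/D) * m i) := by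
    intro i
    have h7 : (1/D) * q i - ((1/D) * m i) * ((1/D) * m i) = (q i * D - (m i)^2) / D^2 := by
      field_simp [hD0.ne']
    rw [h7]
    exact div_nonneg (by linarith [hqm i]) (sq_nonneg D)
  have hT2nn : 0 ≤ ∑ i, ((1/D) * m i) * ((1/D) * m i) :=
    Finset.sum_nonneg fun i _ => mul_self_nonneg _
  constructor
  · have h8 : (0:ℝ) ≤ (∑ i, (1/D) * q i) - ∑ i, ((1/D) * m i) * ((1/D) * m i) := by
      rw [← Finset.sum_sub_distrib]
      exact Finset.sum_nonneg fun i _ => hterm i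
    linarith
  · have hA1le : (∑ i, (1/D) * q i) ≤ 1 := by
      rw [← hA1]
      have hle : (∑ u, ∑ v, (d u / D) * ((Qi * E * Q) u v) * (if c u = c v then 1 else 0))
          ≤ ∑ u, ∑ v, (d u / D) * ((Qi * E * Q) u v) := by
        refine Finset.sum_le_sum fun u _ => Finset.sum_le_sum fun v _ => ?_
        have ha : 0 ≤ (d u / D) * ((Qi * E * Q) u v) :=
          mul_nonneg (div_nonneg (hd0 u).le hD0.le) (hPnn u v)
        by_cases h : c u = c v
        · rw [if_pos h, mul_one]
        · rw [if_neg h, mul_zero]; exact ha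
      refine hle.trans ?_
      have h9 : (∑ u, ∑ v, (d u / D) * ((Qi * E * Q) u v)) = ∑ u : Fin n, d u / D := by
        refine Finset.sum_congr rfl fun u _ => ?_
        rw [← Finset.mul_sum, hProw u, mul_one]
      rw [h9, ← Finset.sum_div, ← hD, div_self hD0.ne']
    linarith
end

section
/- Under the same hypotheses, the Kron reduction satisfies L_α 𝟏 = 0, where 𝟏 is the all-ones vector on α; i.e., the rows of the Kron-reduced Laplacian sum to zero. -/
open Matrix BigOperators

/-- The Kron reduction (Schur complement) of a matrix `L` with respect to a set `α`
of indices: `L_α = L[α,α] - L[α,α^c] L[α^c,α^c]⁻¹ L[α^c,α]`. -/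
noncomputable def kron17 {n : ℕ} (L : Matrix (Fin n) (Fin n) ℝ) (α : Finset (Fin n)) :
    Matrix {x // x ∈ α} {x // x ∈ α} ℝ :=
  L.submatrix (Subtype.val : {x // x ∈ α} → Fin n) Subtype.val -
    L.submatrix (Subtype.val : {x // x ∈ α} → Fin n) (Subtype.val : {x // x ∈ αᶜ} → Fin n) *
      (L.submatrix (Subtype.val : {x // x ∈ αᶜ} → Fin n) (Subtype.val : {x // x ∈ αᶜ} → Fin n))⁻¹ *
      L.submatrix (Subtype.val : {x // x ∈ αᶜ} → Fin n) (Subtype.val : {x // x ∈ α} → Fin n)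

/-- The Kron reduction of the combinatorial Laplacian of a weighted graph with respect to
a nonempty proper subset `α` with invertible block `L[α^c,α^c]` annihilates the all-ones
vector: its rows sum to zero. -/
theorem stmt17 {n : ℕ} (A : Matrix (Fin n) (Fin n) ℝ)
    (hsym : A.IsSymm) (hnonneg : ∀ u v, 0 ≤ A u v)
    (α : Finset (Fin n)) (hne : α.Nonempty) (hprop : α ≠ Finset.univ)
    (hinv : IsUnit ((Matrix.diagonal (fun v => ∑ u, A v u) - A).submatrix
        (Subtype.val : {x // x ∈ αᶜ} → Fin n) (Subtype.val : {x // x ∈ αᶜ} → Fin n)).det) :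
    kron17 (Matrix.diagonal (fun v => ∑ u, A v u) - A) α *ᵥ (fun _ => (1 : ℝ)) = 0 := by
  set L : Matrix (Fin n) (Fin n) ℝ := Matrix.diagonal (fun v => ∑ u, A v u) - A with hL
  set Laa := L.submatrix (Subtype.val : {x // x ∈ α} → Fin n)
      (Subtype.val : {x // x ∈ α} → Fin n) with hLaa
  set Lac := L.submatrix (Subtype.val : {x // x ∈ α} → Fin n)
      (Subtype.val : {x // x ∈ αᶜ} → Fin n) with hLac
  set Lca := L.submatrix (Subtype.val : {x // x ∈ αᶜ} → Fin n)
      (Subtype.val : {x // x ∈ α} → Fin n) with hLca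
  set Lcc := L.submatrix (Subtype.val : {x // x ∈ αᶜ} → Fin n)
      (Subtype.val : {x // x ∈ αᶜ} → Fin n) with hLcc
  have hrow : ∀ i, ∑ j, L i j = 0 := by
    intro i
    simp [hL, Matrix.sub_apply, Finset.sum_sub_distrib, Matrix.diagonal_apply,
      Finset.sum_ite_eq]
  have hsplit : ∀ i : Fin n,
      (∑ j : {x // x ∈ α}, L i j) + (∑ j : {x // x ∈ αᶜ}, L i j) = 0 := by
    intro i
    rw [Finset.sum_coe_sort α (fun j => L i j), Finset.sum_coe_sort αᶜ (fun j => L i j),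
      Finset.sum_add_sum_compl]
    exact hrow i
  have one1 : (fun _ : {x // x ∈ α} => (1 : ℝ)) = fun _ => (1 : ℝ) := rfl
  have step1 : Lca *ᵥ (fun _ => (1 : ℝ)) = -(Lcc *ᵥ (fun _ => (1 : ℝ))) := by
    funext j
    have := hsplit j.val
    simp only [Matrix.mulVec, dotProduct, mul_one, Pi.neg_apply, hLca, hLcc,
      Matrix.submatrix_apply] at *
    linarith
  have step2 : Lcc⁻¹ *ᵥ (Lca *ᵥ (fun _ => (1 : ℝ))) = -(fun _ => (1 : ℝ)) := by
    rw [step1, Matrix.mulVec_neg, Matrix.mulVec_mulVec, Matrix.nonsing_inv_mul _ hinv,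
      Matrix.one_mulVec]
  have : kron17 L α *ᵥ (fun _ => (1 : ℝ)) =
      Laa *ᵥ (fun _ => (1 : ℝ)) + Lac *ᵥ (fun _ => (1 : ℝ)) := by
    rw [kron17, Matrix.sub_mulVec, Matrix.mul_assoc, ← Matrix.mulVec_mulVec,
      ← Matrix.mulVec_mulVec]
    rw [← hLaa, ← hLac, ← hLca, ← hLcc, step2, Matrix.mulVec_neg]
    ring_nf
  rw [this]
  funext i
  have := hsplit i.val
  simp only [Matrix.mulVec, dotProduct, mul_one, Pi.add_apply, Pi.zero_apply,
    hLaa, hLac, Matrix.submatrix_apply]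
  linarith
end
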